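/- (Lemma A.1, first-best α-EWM policy) Suppose χ₀ and χ₁ are continuous on B. Then there exists η* ∈ B such that the threshold policy π*(x) = 1{τ(x, η*) ≥ 0} satisfies J(π*, η*) = sup_π sup_{η ∈ B} J(π, η), where the outer supremum is taken over all measurable policies π : 𝒳 → ℝ with values in {0,1}; in particular, sup_{η ∈ B} J(π*, η) equals this double supremum, i.e., π* maximizes the α-expected welfare over all policies. -/
import Mathlib


open MeasureTheory

/-- **Lemma A.1 (first-best `α`-EWM policy).**
If `χ₀` and `χ₁` are continuous on the nonempty compact set `B`, then there exists
`η* ∈ B` such that the threshold policy `π*(x) = 1{τ(x, η*) ≥ 0}` attains the double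
supremum of the dual welfare objective
`J(π, η) = (1/α)·∫ (π·μ₁(·,η) + (1 − π)·μ₀(·,η)) dν + η`
over all measurable `{0,1}`-valued policies `π` and `η ∈ B`; i.e. `J(π*, η*)` is the
greatest value of `J` over this class, so `π*` maximizes the `α`-expected welfare. -/
theorem first_best_policy
    {𝒳 : Type*} [MeasurableSpace 𝒳] (ν : Measure 𝒳) [IsProbabilityMeasure ν]
    (α : ℝ) (hα0 : 0 < α) (hα1 : α ≤ 1)
    (B : Set ℝ) (hBcompact : IsCompact B) (hBne : B.Nonempty)
    (μ0 μ1 : 𝒳 → ℝ → ℝ)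
    (hm0 : ∀ η ∈ B, Measurable (fun x => μ0 x η))
    (hm1 : ∀ η ∈ B, Measurable (fun x => μ1 x η))
    (hi0 : ∀ η ∈ B, Integrable (fun x => μ0 x η) ν)
    (hi1 : ∀ η ∈ B, Integrable (fun x => μ1 x η) ν)
    (hχ1 : ContinuousOn
      (fun η => ∫ x, (if 0 ≤ μ1 x η - μ0 x η then μ1 x η else 0) ∂ν) B)
    (hχ0 : ContinuousOn
      (fun η => ∫ x, (if μ1 x η - μ0 x η < 0 then μ0 x η else 0) ∂ν) B) :
    ∃ ηs ∈ B,
      IsGreatest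
        {v : ℝ | ∃ π : 𝒳 → ℝ, Measurable π ∧ (∀ x, π x = 0 ∨ π x = 1) ∧
          ∃ η ∈ B, v = (1 / α) * (∫ x, (π x * μ1 x η + (1 - π x) * μ0 x η) ∂ν) + η}
        ((1 / α) * (∫ x, ((if 0 ≤ μ1 x ηs - μ0 x ηs then (1:ℝ) else 0) * μ1 x ηs
            + (1 - (if 0 ≤ μ1 x ηs - μ0 x ηs then (1:ℝ) else 0)) * μ0 x ηs) ∂ν) + ηs) := by
  classical
  set T : ℝ → 𝒳 → ℝ := fun η x => if 0 ≤ μ1 x η - μ0 x η then μ1 x η else μ0 x η with hT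
  have hTmeas : ∀ η ∈ B, Measurable (T η) := by
    intro η hη
    exact Measurable.ite (measurableSet_le measurable_const ((hm1 η hη).sub (hm0 η hη)))
      (hm1 η hη) (hm0 η hη)
  have hbound : ∀ η ∈ B, Integrable (fun x => |μ0 x η| + |μ1 x η|) ν := fun η hη =>
    (hi0 η hη).abs.add (hi1 η hη).abs
  have hTint : ∀ η ∈ B, Integrable (T η) ν := by
    intro η hη
    refine (hbound η hη).mono' (hTmeas η hη).aestronglyMeasurable ?_
    filter_upwards with x
    simp only [T, Real.norm_eq_abs]
    split_ifs
    · exact le_add_of_nonneg_left (abs_nonneg _)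
    · exact le_add_of_nonneg_right (abs_nonneg _)
  have hTval : ∀ η ∈ B, ∫ x, T η x ∂ν =
      (∫ x, (if 0 ≤ μ1 x η - μ0 x η then μ1 x η else 0) ∂ν)
      + (∫ x, (if μ1 x η - μ0 x η < 0 then μ0 x η else 0) ∂ν) := by
    intro η hη
    have h1 : Integrable (fun x => if 0 ≤ μ1 x η - μ0 x η then μ1 x η else 0) ν := by
      refine (hbound η hη).mono' (Measurable.ite (measurableSet_le measurable_const
        ((hm1 η hη).sub (hm0 η hη))) (hm1 η hη) measurable_const).aestronglyMeasurable ?_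
      filter_upwards with x
      simp only [Real.norm_eq_abs]
      split_ifs
      · exact le_add_of_nonneg_left (abs_nonneg _)
      · simpa using add_nonneg (abs_nonneg (μ0 x η)) (abs_nonneg (μ1 x η))
    have h0 : Integrable (fun x => if μ1 x η - μ0 x η < 0 then μ0 x η else 0) ν := by
      refine (hbound η hη).mono' (Measurable.ite (measurableSet_lt ((hm1 η hη).sub (hm0 η hη))
        measurable_const) (hm0 η hη) measurable_const).aestronglyMeasurable ?_
      filter_upwards with x
      simp only [Real.norm_eq_abs]
      split_ifs
      · exact le_add_of_nonneg_right (abs_nonneg _)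
      · simpa using add_nonneg (abs_nonneg (μ0 x η)) (abs_nonneg (μ1 x η))
    rw [← integral_add h1 h0]
    refine integral_congr_ae (Filter.Eventually.of_forall fun x => ?_)
    simp only [T]
    split_ifs with h h' h' <;> linarith
  set g : ℝ → ℝ := fun η => (1 / α) * (∫ x, T η x ∂ν) + η with hg
  have hgcont : ContinuousOn g B := by
    have h' : ContinuousOn (fun η => (1 / α) *
        ((∫ x, (if 0 ≤ μ1 x η - μ0 x η then μ1 x η else 0) ∂ν)
          + (∫ x, (if μ1 x η - μ0 x η < 0 then μ0 x η else 0) ∂ν)) + η) B :=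
      ((continuousOn_const.mul (hχ1.add hχ0)).add continuousOn_id)
    exact h'.congr fun η hη => by simp [g, hTval η hη]
  obtain ⟨ηs, hηsB, hmax⟩ := hBcompact.exists_isMaxOn hBne hgcont
  refine ⟨ηs, hηsB, ?_, ?_⟩
  · refine ⟨fun x => if 0 ≤ μ1 x ηs - μ0 x ηs then (1:ℝ) else 0,
      Measurable.ite (measurableSet_le measurable_const
        ((hm1 ηs hηsB).sub (hm0 ηs hηsB))) measurable_const measurable_const,
      fun x => by by_cases h : 0 ≤ μ1 x ηs - μ0 x ηs <;> simp [h],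
      ηs, hηsB, rfl⟩
  · rintro v ⟨π, hπm, hπ01, η, hη, rfl⟩
    have hRHS : ∫ x, ((if 0 ≤ μ1 x ηs - μ0 x ηs then (1:ℝ) else 0) * μ1 x ηs
        + (1 - (if 0 ≤ μ1 x ηs - μ0 x ηs then (1:ℝ) else 0)) * μ0 x ηs) ∂ν = ∫ x, T ηs x ∂ν := by
      refine integral_congr_ae (Filter.Eventually.of_forall fun x => ?_)
      simp only [T]
      split_ifs <;> ring
    have hLint : Integrable (fun x => π x * μ1 x η + (1 - π x) * μ0 x η) ν := by
      refine (hbound η hη).mono' (((hπm.mul (hm1 η hη)).add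
        ((measurable_const.sub hπm).mul (hm0 η hη)))).aestronglyMeasurable ?_
      filter_upwards with x
      rcases hπ01 x with h | h <;> simp [h, Real.norm_eq_abs] <;>
        first
        | exact le_add_of_nonneg_right (abs_nonneg _)
        | exact le_add_of_nonneg_left (abs_nonneg _)
    have hle : ∫ x, (π x * μ1 x η + (1 - π x) * μ0 x η) ∂ν ≤ ∫ x, T η x ∂ν := by
      refine integral_mono hLint (hTint η hη) fun x => ?_
      rcases hπ01 x with h | h <;> simp [T, h] <;> split_ifs with h' <;> linarith
    have hstep : (1 / α) * (∫ x, (π x * μ1 x η + (1 - π x) * μ0 x η) ∂ν) + η ≤ g η := by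
      have hpos : (0:ℝ) < 1 / α := by positivity
      have := mul_le_mul_of_nonneg_left hle hpos.le
      simpa [g] using add_le_add_right this η
    calc (1 / α) * (∫ x, (π x * μ1 x η + (1 - π x) * μ0 x η) ∂ν) + η ≤ g η := hstep
      _ ≤ g ηs := hmax hη
      _ = _ := by rw [hg, hRHS]
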